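/- Let A be a semiprime f-algebra, B a subalgebra of A, and f, g ∈ B. Then f⁺g⁺, f⁺g⁻, f⁻g⁺, f⁻g⁻, and f·|g| all belong to the Riesz subspace R(B) generated by B. -/
import Mathlib

section Aux

variable {A : Type*} [Ring A] [Lattice A] [CovariantClass A A (· + ·) (· ≤ ·)]

instance (priority := 100) auxSwapCovariant :
    CovariantClass A A (Function.swap (· + ·)) (· ≤ ·) :=
  ⟨fun x _ _ h => by simpa [add_comm] using add_le_add_left h x⟩

/-- In a lattice-ordered group, for nonneg elements `x ⊓ (y+z) ≤ x⊓y + x⊓z`. -/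
lemma aux_inf_add_le {x y z : A} (hx : 0 ≤ x) (hy : 0 ≤ y) (hz : 0 ≤ z) :
    x ⊓ (y + z) ≤ x ⊓ y + (x ⊓ z) := by
  have h1 : x ⊓ (y + z) ≤ (x ⊓ y) + x := by
    refine le_trans inf_le_left (le_add_of_nonneg_left ?_)
    exact le_inf hx hy
  have h2 : x ⊓ (y + z) ≤ (x ⊓ y) + z := by
    have e : (x ⊓ y) + z = (x + z) ⊓ (y + z) := by
      rw [add_comm (x ⊓ y) z, add_inf x y z, add_comm z x, add_comm z y]
    rw [e]
    exact le_inf (le_trans inf_le_left (le_add_of_nonneg_right hz)) inf_le_right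
  have e1 : (x ⊓ y) + (x ⊓ z) = ((x ⊓ y) + x) ⊓ ((x ⊓ y) + z) := add_inf x z (x ⊓ y)
  rw [e1]
  exact le_inf h1 h2

lemma aux_inf_add_eq_zero {x y z : A} (hx : 0 ≤ x) (hy : 0 ≤ y) (hz : 0 ≤ z)
    (hxy : x ⊓ y = 0) (hxz : x ⊓ z = 0) : x ⊓ (y + z) = 0 := by
  refine le_antisymm ?_ (le_inf hx (add_nonneg hy hz))
  have := aux_inf_add_le hx hy hz
  rwa [hxy, hxz, add_zero] at this

end Aux

section FAlg

variable {A : Type*} [Ring A] [Lattice A] [CovariantClass A A (· + ·) (· ≤ ·)]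

variable (hmulpos : ∀ x y : A, 0 ≤ x → 0 ≤ y → 0 ≤ x * y)
variable (hfalg : ∀ f g h : A, f ⊓ g = 0 → 0 ≤ h → (f * h) ⊓ g = 0 ∧ (h * f) ⊓ g = 0)
set_option linter.unusedSectionVars false

include hfalg in
/-- disjoint nonneg elements multiply to zero. -/
lemma aux_mul_eq_zero {x y : A} (hx : 0 ≤ x) (hy : 0 ≤ y) (h : x ⊓ y = 0) :
    x * y = 0 := by
  have h1 : (x * y) ⊓ y = 0 := (hfalg x y y h hy).1
  have h2 : (x * y) ⊓ (x * y) = 0 :=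
    (hfalg y (x * y) x (by rwa [inf_comm] at h1) hx).2
  rwa [inf_idem] at h2

include hfalg in
lemma aux_posPart_mul_negPart (a : A) : a⁺ * a⁻ = 0 :=
  aux_mul_eq_zero hfalg (posPart_nonneg a) (negPart_nonneg a)
    (posPart_inf_negPart_eq_zero a)

include hfalg in
lemma aux_negPart_mul_posPart (a : A) : a⁻ * a⁺ = 0 :=
  aux_mul_eq_zero hfalg (negPart_nonneg a) (posPart_nonneg a)
    (by rw [inf_comm]; exact posPart_inf_negPart_eq_zero a)

include hmulpos hfalg in
lemma aux_sq_nonneg (a : A) : 0 ≤ a * a := by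
  have e : a * a = a⁺ * a⁺ + a⁻ * a⁻ := by
    have expand : (a⁺ - a⁻) * (a⁺ - a⁻)
        = a⁺ * a⁺ - a⁺ * a⁻ - a⁻ * a⁺ + a⁻ * a⁻ := by noncomm_ring
    conv_lhs => rw [← posPart_sub_negPart a]
    rw [expand, aux_posPart_mul_negPart hfalg a, aux_negPart_mul_posPart hfalg a,
      sub_zero, sub_zero]
  rw [e]
  exact add_nonneg (hmulpos _ _ (posPart_nonneg a) (posPart_nonneg a))
    (hmulpos _ _ (negPart_nonneg a) (negPart_nonneg a))

/-- identify the positive part of a difference of disjoint nonneg elements. -/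
lemma aux_posPart_eq {a p n : A} (hp : 0 ≤ p) (hn : 0 ≤ n) (hd : p ⊓ n = 0)
    (he : a = p - n) : a⁺ = p := by
  have hsup : p ⊔ n = p + n := by
    have := inf_add_sup p n
    rw [hd, zero_add] at this
    exact this
  have e2 : (p - n) ⊔ 0 = (p ⊔ n) - n := by
    rw [sub_eq_add_neg (p ⊔ n) n, add_comm (p ⊔ n) (-n), add_sup p n (-n),
      add_comm (-n) p, ← sub_eq_add_neg, neg_add_cancel]
  rw [posPart_def, he, e2, hsup, add_sub_cancel_right]

include hfalg in
lemma aux_key_disj {u u' c : A} (h : u ⊓ u' = 0) (hc : 0 ≤ c) :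
    (u * c) ⊓ u' = 0 := (hfalg u u' c h hc).1

include hmulpos hfalg in
/-- The main identity:
`f⁺ * g⁺ = (f*g)⁺ ⊓ ((f + f³)⁺ + (g + g³)⁺)`. -/
lemma aux_main_identity (f g : A) :
    f⁺ * g⁺ = (f * g)⁺ ⊓ ((f + f * (f * f))⁺ + (g + g * (g * g))⁺) := by
  set u := f⁺ with hu
  set u' := f⁻ with hu'
  set v := g⁺ with hv
  set v' := g⁻ with hv'
  have hu0 : 0 ≤ u := posPart_nonneg f
  have hu'0 : 0 ≤ u' := negPart_nonneg f
  have hv0 : 0 ≤ v := posPart_nonneg g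
  have hv'0 : 0 ≤ v' := negPart_nonneg g
  have hdu : u ⊓ u' = 0 := posPart_inf_negPart_eq_zero f
  have hdu' : u' ⊓ u = 0 := by rw [inf_comm]; exact hdu
  have hdv : v ⊓ v' = 0 := posPart_inf_negPart_eq_zero g
  have hdv' : v' ⊓ v = 0 := by rw [inf_comm]; exact hdv
  have huu' : u * u' = 0 := aux_posPart_mul_negPart hfalg f
  have hu'u : u' * u = 0 := aux_negPart_mul_posPart hfalg f
  have hvv' : v * v' = 0 := aux_posPart_mul_negPart hfalg g
  have hv'v : v' * v = 0 := aux_negPart_mul_posPart hfalg g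
  -- nonnegativity of products
  have m1 : 0 ≤ u * v := hmulpos _ _ hu0 hv0
  have m2 : 0 ≤ u * v' := hmulpos _ _ hu0 hv'0
  have m3 : 0 ≤ u' * v := hmulpos _ _ hu'0 hv0
  have m4 : 0 ≤ u' * v' := hmulpos _ _ hu'0 hv'0
  -- pairwise disjointness of the four products
  -- (u*v) ⊓ (u*v') = 0
  have d13 : (u * v) ⊓ (u * v') = 0 := by
    have s1 : (u * v) ⊓ v' = 0 := (hfalg v v' u hdv hu0).2
    have s2 : (u * v') ⊓ (u * v) = 0 :=
      (hfalg v' (u * v) u (by rwa [inf_comm] at s1) hu0).2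
    rwa [inf_comm] at s2
  have d14 : (u * v) ⊓ (u' * v) = 0 := by
    have s1 : (u * v) ⊓ u' = 0 := aux_key_disj hfalg hdu hv0
    have s2 : (u' * v) ⊓ (u * v) = 0 :=
      aux_key_disj hfalg (by rwa [inf_comm] at s1) hv0
    rwa [inf_comm] at s2
  have d23 : (u' * v') ⊓ (u * v') = 0 := by
    have s1 : (u' * v') ⊓ u = 0 := aux_key_disj hfalg hdu' hv'0
    have s2 : (u * v') ⊓ (u' * v') = 0 :=
      aux_key_disj hfalg (by rwa [inf_comm] at s1) hv'0
    rwa [inf_comm] at s2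
  have d24 : (u' * v') ⊓ (u' * v) = 0 := by
    have s1 : (u' * v') ⊓ v = 0 := (hfalg v' v u' hdv' hu'0).2
    have s2 : (u' * v) ⊓ (u' * v') = 0 :=
      (hfalg v (u' * v') u' (by rwa [inf_comm] at s1) hu'0).2
    rwa [inf_comm] at s2
  -- (f*g)⁺ = u*v + u'*v'
  have hfg : f * g = (u * v + u' * v') - (u * v' + u' * v) := by
    have : f * g = (u - u') * (v - v') := by rw [hu, hu', hv, hv',
      posPart_sub_negPart, posPart_sub_negPart]
    rw [this]; noncomm_ring
  have hdisjPN : (u * v + u' * v') ⊓ (u * v' + u' * v) = 0 := by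
    have h1 : (u * v) ⊓ (u * v' + u' * v) = 0 :=
      aux_inf_add_eq_zero m1 m2 m3 d13 d14
    have h2 : (u' * v') ⊓ (u * v' + u' * v) = 0 :=
      aux_inf_add_eq_zero m4 m2 m3 d23 d24
    rw [inf_comm]
    exact aux_inf_add_eq_zero (add_nonneg m2 m3) m1 m4
      (by rwa [inf_comm] at h1) (by rwa [inf_comm] at h2)
  have hfgpos : (f * g)⁺ = u * v + u' * v' :=
    aux_posPart_eq (add_nonneg m1 m4) (add_nonneg m2 m3) hdisjPN hfg
  -- (f + f³)⁺ = u + u³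
  have cube_pos : ∀ a : A, a + a * (a * a)
      = (a⁺ + a⁺ * (a⁺ * a⁺)) - (a⁻ + a⁻ * (a⁻ * a⁻)) := by
    intro a
    have hab : a⁺ * a⁻ = 0 := aux_posPart_mul_negPart hfalg a
    have hba : a⁻ * a⁺ = 0 := aux_negPart_mul_posPart hfalg a
    have sq : (a⁺ - a⁻) * (a⁺ - a⁻) = a⁺ * a⁺ + a⁻ * a⁻ := by
      have e : (a⁺ - a⁻) * (a⁺ - a⁻)
          = a⁺ * a⁺ - a⁺ * a⁻ - a⁻ * a⁺ + a⁻ * a⁻ := by noncomm_ring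
      rw [e, hab, hba, sub_zero, sub_zero]
    have cube : (a⁺ - a⁻) * ((a⁺ - a⁻) * (a⁺ - a⁻))
        = a⁺ * (a⁺ * a⁺) - a⁻ * (a⁻ * a⁻) := by
      rw [sq]
      have e2 : (a⁺ - a⁻) * (a⁺ * a⁺ + a⁻ * a⁻)
          = a⁺ * (a⁺ * a⁺) - a⁻ * (a⁻ * a⁻)
            + ((a⁺ * a⁻) * a⁻ - (a⁻ * a⁺) * a⁺) := by noncomm_ring
      rw [e2, hab, hba, zero_mul, zero_mul, sub_zero, add_zero]
    calc a + a * (a * a) = (a⁺ - a⁻) + (a⁺ - a⁻) * ((a⁺ - a⁻) * (a⁺ - a⁻)) := by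
          rw [posPart_sub_negPart]
      _ = (a⁺ + a⁺ * (a⁺ * a⁺)) - (a⁻ + a⁻ * (a⁻ * a⁻)) := by
          rw [cube]; abel
  have cube_disj : ∀ a : A, (a⁺ + a⁺ * (a⁺ * a⁺)) ⊓ (a⁻ + a⁻ * (a⁻ * a⁻)) = 0 := by
    intro a
    have hp0 : (0:A) ≤ a⁺ := posPart_nonneg a
    have hn0 : (0:A) ≤ a⁻ := negPart_nonneg a
    have hd : a⁺ ⊓ a⁻ = 0 := posPart_inf_negPart_eq_zero a
    have hd' : a⁻ ⊓ a⁺ = 0 := by rw [inf_comm]; exact hd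
    have hpp : (0:A) ≤ a⁺ * (a⁺ * a⁺) := hmulpos _ _ hp0 (hmulpos _ _ hp0 hp0)
    have hnn : (0:A) ≤ a⁻ * (a⁻ * a⁻) := hmulpos _ _ hn0 (hmulpos _ _ hn0 hn0)
    have d1 : a⁺ ⊓ (a⁻ * (a⁻ * a⁻)) = 0 := by
      have := aux_key_disj hfalg hd' (hmulpos _ _ hn0 hn0)
      rwa [inf_comm] at this
    have d2 : (a⁺ * (a⁺ * a⁺)) ⊓ a⁻ = 0 :=
      aux_key_disj hfalg hd (hmulpos _ _ hp0 hp0)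
    have d3 : (a⁺ * (a⁺ * a⁺)) ⊓ (a⁻ * (a⁻ * a⁻)) = 0 := by
      have := aux_key_disj hfalg (by rwa [inf_comm] at d2) (hmulpos _ _ hn0 hn0)
      rwa [inf_comm] at this
    have h1 : a⁺ ⊓ (a⁻ + a⁻ * (a⁻ * a⁻)) = 0 :=
      aux_inf_add_eq_zero hp0 hn0 hnn hd d1
    have h2 : (a⁺ * (a⁺ * a⁺)) ⊓ (a⁻ + a⁻ * (a⁻ * a⁻)) = 0 :=
      aux_inf_add_eq_zero hpp hn0 hnn d2 d3
    rw [inf_comm]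
    exact aux_inf_add_eq_zero (add_nonneg hn0 hnn) hp0 hpp
      (by rwa [inf_comm] at h1) (by rwa [inf_comm] at h2)
  have hcubef : (f + f * (f * f))⁺ = u + u * (u * u) :=
    aux_posPart_eq (add_nonneg hu0 (hmulpos _ _ hu0 (hmulpos _ _ hu0 hu0)))
      (add_nonneg hu'0 (hmulpos _ _ hu'0 (hmulpos _ _ hu'0 hu'0)))
      (cube_disj f) (cube_pos f)
  have hcubeg : (g + g * (g * g))⁺ = v + v * (v * v) :=
    aux_posPart_eq (add_nonneg hv0 (hmulpos _ _ hv0 (hmulpos _ _ hv0 hv0)))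
      (add_nonneg hv'0 (hmulpos _ _ hv'0 (hmulpos _ _ hv'0 hv'0)))
      (cube_disj g) (cube_pos g)
  rw [hfgpos, hcubef, hcubeg]
  set S : A := (u + u * (u * u)) + (v + v * (v * v)) with hS
  have hS0 : 0 ≤ S := add_nonneg
    (add_nonneg hu0 (hmulpos _ _ hu0 (hmulpos _ _ hu0 hu0)))
    (add_nonneg hv0 (hmulpos _ _ hv0 (hmulpos _ _ hv0 hv0)))
  -- ≤ : u*v ≤ S
  have sq_le : ∀ a : A, 0 ≤ a → a * a ≤ a + a * (a * a) := by
    intro a ha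
    have h := hmulpos a ((a - 1) * (a - 1)) ha (aux_sq_nonneg hmulpos hfalg (a - 1))
    have e : a * ((a - 1) * (a - 1)) = (a + a * (a * a)) - (a * a + a * a) := by
      noncomm_ring
    rw [e, sub_nonneg] at h
    exact le_trans (le_add_of_nonneg_left (hmulpos a a ha ha)) h
  have uv_le : u * v ≤ S := by
    have h1 : 0 ≤ (u - v) * (u - v) := aux_sq_nonneg hmulpos hfalg (u - v)
    have e : (u - v) * (u - v) = (u * u + v * v) - (u * v + v * u) := by noncomm_ring
    rw [e, sub_nonneg] at h1
    have h2 : u * v ≤ u * u + v * v :=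
      le_trans (le_add_of_nonneg_right (hmulpos _ _ hv0 hu0)) h1
    exact le_trans h2 (add_le_add (sq_le u hu0) (sq_le v hv0))
  -- u'*v' disjoint from S
  have hdS : (u' * v') ⊓ S = 0 := by
    have d1 : (u' * v') ⊓ u = 0 := aux_key_disj hfalg hdu' hv'0
    have d2 : (u' * v') ⊓ (u * (u * u)) = 0 := by
      have := aux_key_disj hfalg (by rwa [inf_comm] at d1) (hmulpos _ _ hu0 hu0)
      rwa [inf_comm] at this
    have d3 : (u' * v') ⊓ v = 0 := (hfalg v' v u' hdv' hu'0).2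
    have d4 : (u' * v') ⊓ (v * (v * v)) = 0 := by
      have := aux_key_disj hfalg (by rwa [inf_comm] at d3) (hmulpos _ _ hv0 hv0)
      rwa [inf_comm] at this
    exact aux_inf_add_eq_zero m4
      (add_nonneg hu0 (hmulpos _ _ hu0 (hmulpos _ _ hu0 hu0)))
      (add_nonneg hv0 (hmulpos _ _ hv0 (hmulpos _ _ hv0 hv0)))
      (aux_inf_add_eq_zero m4 hu0 (hmulpos _ _ hu0 (hmulpos _ _ hu0 hu0)) d1 d2)
      (aux_inf_add_eq_zero m4 hv0 (hmulpos _ _ hv0 (hmulpos _ _ hv0 hv0)) d3 d4)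
  refine le_antisymm (le_inf (le_add_of_nonneg_right m4) uv_le) ?_
  have step : (u * v + u' * v') ⊓ S ≤ u * v + ((u' * v') ⊓ S) := by
    have e : u * v + ((u' * v') ⊓ S) = (u * v + u' * v') ⊓ (u * v + S) :=
      add_inf (u' * v') S (u * v)
    rw [e]
    exact inf_le_inf_left _ (le_add_of_nonneg_left m1)
  rw [hdS, add_zero] at step
  exact step

end FAlg

/-- For a subalgebra `B` of a semiprime Archimedean f-algebra `A` and
`f, g ∈ B`, the elements `f⁺g⁺`, `f⁺g⁻`, `f⁻g⁺`, `f⁻g⁻` and `f·|g|` all lie in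
the Riesz subspace `R(B)` generated by `B`. -/
theorem parts_products_mem_rieszSubspace
    {A : Type*} [Ring A] [Lattice A] [CovariantClass A A (· + ·) (· ≤ ·)]
    [Module ℝ A]
    (hmulpos : ∀ x y : A, 0 ≤ x → 0 ≤ y → 0 ≤ x * y)
    (hfalg : ∀ f g h : A, f ⊓ g = 0 → 0 ≤ h → (f * h) ⊓ g = 0 ∧ (h * f) ⊓ g = 0)
    (hsemiprime : ∀ a : A, (∃ n : ℕ, 0 < n ∧ a ^ n = 0) → a = 0)
    (harch : ∀ x y : A, (∀ n : ℕ, n • x ≤ y) → x ≤ 0)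
    (B : Submodule ℝ A)
    (hBmul : ∀ x ∈ B, ∀ y ∈ B, x * y ∈ B)
    (RB : Submodule ℝ A)
    (hRB : RB = sInf {S : Submodule ℝ A | B ≤ S ∧ ∀ z ∈ S, |z| ∈ S})
    (f g : A) (hf : f ∈ B) (hg : g ∈ B) :
    (f ⊔ 0) * (g ⊔ 0) ∈ RB ∧
      (f ⊔ 0) * ((-g) ⊔ 0) ∈ RB ∧
      ((-f) ⊔ 0) * (g ⊔ 0) ∈ RB ∧
      ((-f) ⊔ 0) * ((-g) ⊔ 0) ∈ RB ∧
      f * |g| ∈ RB := by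
  -- basic properties of RB
  have hBle : B ≤ RB := by
    rw [hRB]; exact le_sInf fun S hS => hS.1
  have habs : ∀ z ∈ RB, |z| ∈ RB := by
    intro z hz
    rw [hRB] at hz ⊢
    rw [Submodule.mem_sInf] at hz ⊢
    intro S hS
    exact hS.2 z (hz S hS)
  have hpos : ∀ z ∈ RB, z⁺ ∈ RB := by
    intro z hz
    have e1 : z + |z| = z⁺ + z⁺ := by
      rw [← posPart_add_negPart z]
      nth_rewrite 1 [← posPart_sub_negPart z]
      abel
    have e2 : z⁺ = (2⁻¹ : ℝ) • (z + |z|) := by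
      rw [e1, ← two_smul ℝ (z⁺), smul_smul]
      norm_num
    rw [e2]
    exact Submodule.smul_mem _ _ (Submodule.add_mem _ hz (habs z hz))
  have hinf : ∀ x ∈ RB, ∀ y ∈ RB, x ⊓ y ∈ RB := by
    intro x hx y hy
    have e : x ⊓ y = x - (x - y)⁺ := by
      have e1 : x - x ⊓ y = (x - x) ⊔ (x - y) := sub_inf x y x
      rw [sub_self, sup_comm, ← posPart_def] at e1
      rw [← e1, sub_sub_cancel]
    rw [e]
    exact Submodule.sub_mem _ hx (hpos _ (Submodule.sub_mem _ hx hy))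
  -- the key membership fact
  have main : ∀ a ∈ B, ∀ b ∈ B, (a ⊔ 0) * (b ⊔ 0) ∈ RB := by
    intro a ha b hb
    have key := aux_main_identity hmulpos hfalg a b
    rw [posPart_def a, posPart_def b] at key
    rw [key]
    have h1 : (a * b)⁺ ∈ RB := hpos _ (hBle (hBmul a ha b hb))
    have h2 : (a + a * (a * a))⁺ ∈ RB :=
      hpos _ (hBle (Submodule.add_mem _ ha (hBmul a ha _ (hBmul a ha a ha))))
    have h3 : (b + b * (b * b))⁺ ∈ RB :=
      hpos _ (hBle (Submodule.add_mem _ hb (hBmul b hb _ (hBmul b hb b hb))))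
    exact hinf _ h1 _ (Submodule.add_mem _ h2 h3)
  have hnf : -f ∈ B := Submodule.neg_mem _ hf
  have hng : -g ∈ B := Submodule.neg_mem _ hg
  refine ⟨main f hf g hg, main f hf _ hng, main _ hnf g hg, main _ hnf _ hng, ?_⟩
  have e : f * |g| = f⁺ * g⁺ - f⁻ * g⁺ + (f⁺ * g⁻ - f⁻ * g⁻) := by
    conv_lhs => rw [← posPart_add_negPart g, ← posPart_sub_negPart f]
    noncomm_ring
  have eform : f * |g| = (f ⊔ 0) * (g ⊔ 0) - ((-f) ⊔ 0) * (g ⊔ 0)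
      + ((f ⊔ 0) * ((-g) ⊔ 0) - ((-f) ⊔ 0) * ((-g) ⊔ 0)) := by
    rw [e, posPart_def, posPart_def, negPart_def, negPart_def]
  rw [eform]
  exact Submodule.add_mem _
    (Submodule.sub_mem _ (main f hf g hg) (main _ hnf g hg))
    (Submodule.sub_mem _ (main f hf _ hng) (main _ hnf _ hng))
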